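/- Under the general setup, the operator T : K → K is compact, i.e. T is continuous on K and maps every bounded subset of K to a relatively compact subset of C([0,1])×C([0,1]). -/

import Mathlib

open MeasureTheory Set Filter

noncomputable section

/-- The sup norm `‖w‖∞ = sup {|w(t)| : t ∈ [0,1]}`. -/
def supN (w : ℝ → ℝ) : ℝ := sSup ((fun t => |w t|) '' Icc (0:ℝ) 1)

/-- The minimum `min {w(t) : t ∈ [a,b]}`. -/
def minOnIcc (w : ℝ → ℝ) (a b : ℝ) : ℝ := sInf (w '' Icc a b)

/-- The general setup of Infante–Pietramala, "Multiple positive solutions of systems with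
coupled nonlinear BCs".  Indices `i, j ∈ {1,2}` of the paper correspond to `0, 1 : Fin 2`. -/
structure Setup where
  f : Fin 2 → ℝ → ℝ → ℝ → ℝ
  k : Fin 2 → ℝ → ℝ → ℝ
  g : Fin 2 → ℝ → ℝ
  a : Fin 2 → ℝ
  b : Fin 2 → ℝ
  Φ : Fin 2 → ℝ → ℝ
  c : Fin 2 → ℝ
  B : Fin 2 → Fin 2 → Measure ℝ
  C : Fin 2 → Fin 2 → Measure ℝ
  H : Fin 2 → Fin 2 → ℝ → ℝ
  L : Fin 2 → Fin 2 → ℝ → ℝ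
  h1 : Fin 2 → Fin 2 → ℝ
  h2 : Fin 2 → Fin 2 → ℝ
  l2 : Fin 2 → Fin 2 → ℝ
  γ : Fin 2 → Fin 2 → ℝ → ℝ
  cγ : Fin 2 → Fin 2 → ℝ
  -- the nonlinearities fᵢ : [0,1] × [0,∞)² → [0,∞) satisfy Carathéodory conditions
  f_nonneg : ∀ i, ∀ t ∈ Icc (0:ℝ) 1, ∀ u, 0 ≤ u → ∀ v, 0 ≤ v → 0 ≤ f i t u v
  f_meas : ∀ i u v, Measurable fun t => f i t u v
  f_cont : ∀ i, ∀ᵐ t ∂(volume.restrict (Icc (0:ℝ) 1)),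
      ContinuousOn (fun p : ℝ × ℝ => f i t p.1 p.2) (Ici 0 ×ˢ Ici 0)
  f_bdd : ∀ i, ∀ r > (0:ℝ), ∃ φ : ℝ → ℝ, MemLp φ ⊤ (volume.restrict (Icc (0:ℝ) 1)) ∧
      ∀ᵐ t ∂(volume.restrict (Icc (0:ℝ) 1)), ∀ u ∈ Icc (0:ℝ) r, ∀ v ∈ Icc (0:ℝ) r,
        f i t u v ≤ φ t
  -- the kernels
  k_nonneg : ∀ i, ∀ t ∈ Icc (0:ℝ) 1, ∀ s ∈ Icc (0:ℝ) 1, 0 ≤ k i t s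
  k_meas : ∀ i, Measurable (Function.uncurry (k i))
  k_cont : ∀ i, ∀ τ ∈ Icc (0:ℝ) 1, ∀ᵐ s ∂(volume.restrict (Icc (0:ℝ) 1)),
      Tendsto (fun t => |k i t s - k i τ s|) (nhds τ) (nhds 0)
  -- the subintervals [aᵢ,bᵢ] ⊆ [0,1], the functions Φᵢ and the constants cᵢ ∈ (0,1]
  ab_mem : ∀ i, 0 ≤ a i ∧ a i ≤ b i ∧ b i ≤ 1
  Φ_mem : ∀ i, MemLp (Φ i) ⊤ (volume.restrict (Icc (0:ℝ) 1))
  c_mem : ∀ i, c i ∈ Ioc (0:ℝ) 1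
  k_le : ∀ i, ∀ t ∈ Icc (0:ℝ) 1, ∀ᵐ s ∂(volume.restrict (Icc (0:ℝ) 1)), k i t s ≤ Φ i s
  k_ge : ∀ i, ∀ t ∈ Icc (a i) (b i), ∀ᵐ s ∂(volume.restrict (Icc (0:ℝ) 1)),
      c i * Φ i s ≤ k i t s
  -- the weights gᵢ
  g_meas : ∀ i, Measurable (g i)
  g_nonneg : ∀ i, ∀ᵐ s ∂(volume.restrict (Icc (0:ℝ) 1)), 0 ≤ g i s
  gΦ_int : ∀ i, IntegrableOn (fun s => g i s * Φ i s) (Icc (0:ℝ) 1)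
  gΦ_pos : ∀ i, 0 < ∫ s in Icc (a i) (b i), Φ i s * g i s
  -- the Stieltjes measures defining the functionals β and δ
  B_fin : ∀ i j, IsFiniteMeasure (B i j)
  C_fin : ∀ i j, IsFiniteMeasure (C i j)
  B_supp : ∀ i j, B i j (Icc (0:ℝ) 1)ᶜ = 0
  C_supp : ∀ i j, C i j (Icc (0:ℝ) 1)ᶜ = 0
  -- the nonlinear boundary functions H, L with their linear bounds
  H_cont : ∀ i j, ContinuousOn (H i j) (Ici 0)
  L_cont : ∀ i j, ContinuousOn (L i j) (Ici 0)
  H_nonneg : ∀ i j w, 0 ≤ w → 0 ≤ H i j w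
  L_nonneg : ∀ i j w, 0 ≤ w → 0 ≤ L i j w
  h1_nonneg : ∀ i j, 0 ≤ h1 i j
  h2_nonneg : ∀ i j, 0 ≤ h2 i j
  l2_nonneg : ∀ i j, 0 ≤ l2 i j
  H_bound_lower : ∀ i j w, 0 ≤ w → h1 i j * w ≤ H i j w
  H_bound_upper : ∀ i j w, 0 ≤ w → H i j w ≤ h2 i j * w
  L_bound : ∀ i j w, 0 ≤ w → L i j w ≤ l2 i j * w
  -- the functions γᵢⱼ
  γ_cont : ∀ i j, ContinuousOn (γ i j) (Icc (0:ℝ) 1)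
  γ_nonneg : ∀ i j, ∀ t ∈ Icc (0:ℝ) 1, 0 ≤ γ i j t
  hβγ : ∀ i j, h2 i j * ∫ s, γ i j s ∂(B i j) < 1
  cγ_mem : ∀ i j, cγ i j ∈ Ioc (0:ℝ) 1
  γ_ge : ∀ i j, ∀ t ∈ Icc (a i) (b i), cγ i j * supN (γ i j) ≤ γ i j t
  -- positivity of the determinants Dᵢ
  D_pos : ∀ i,
      0 < (1 - h2 i 0 * ∫ s, γ i 0 s ∂(B i 0)) * (1 - h2 i 1 * ∫ s, γ i 1 s ∂(B i 1))
        - h2 i 0 * h2 i 1 * (∫ s, γ i 1 s ∂(B i 0)) * (∫ s, γ i 0 s ∂(B i 1))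

namespace Setup

variable (S : Setup)

/-- The functionals `β_{ij}[w] = ∫₀¹ w dB_{ij}`. -/
def β (i j : Fin 2) (w : ℝ → ℝ) : ℝ := ∫ s, w s ∂(S.B i j)

/-- The functionals `δ_{ij}[w] = ∫₀¹ w dC_{ij}`. -/
def δ (i j : Fin 2) (w : ℝ → ℝ) : ℝ := ∫ s, w s ∂(S.C i j)

/-- The Hammerstein integral operators `Fᵢ`. -/
def F (i : Fin 2) (u v : ℝ → ℝ) (t : ℝ) : ℝ :=
  ∫ s in Icc (0:ℝ) 1, S.k i t s * S.g i s * S.f i s (u s) (v s)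

/-- First component of the operator `T`. -/
def T1 (u v : ℝ → ℝ) (t : ℝ) : ℝ :=
  S.γ 0 0 t * (S.H 0 0 (S.β 0 0 u) + S.L 0 0 (S.δ 0 0 v))
    + S.γ 0 1 t * (S.H 0 1 (S.β 0 1 u) + S.L 0 1 (S.δ 0 1 v))
    + S.F 0 u v t

/-- Second component of the operator `T`. -/
def T2 (u v : ℝ → ℝ) (t : ℝ) : ℝ :=
  S.γ 1 0 t * (S.L 1 0 (S.δ 1 0 u) + S.H 1 0 (S.β 1 0 v))
    + S.γ 1 1 t * (S.L 1 1 (S.δ 1 1 u) + S.H 1 1 (S.β 1 1 v))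
    + S.F 1 u v t

/-- The constants `c̃ᵢ = min{cᵢ, c_{i1}, c_{i2}}`. -/
def ctilde (i : Fin 2) : ℝ := min (S.c i) (min (S.cγ i 0) (S.cγ i 1))

/-- The constant `c = min{c̃₁, c̃₂}`. -/
def cc : ℝ := min (S.ctilde 0) (S.ctilde 1)

/-- Membership of `(u,v)` in the cone `K = K̃₁ × K̃₂`. -/
def inK (u v : ℝ → ℝ) : Prop :=
  ContinuousOn u (Icc (0:ℝ) 1) ∧ ContinuousOn v (Icc (0:ℝ) 1) ∧
  (∀ t ∈ Icc (0:ℝ) 1, 0 ≤ u t) ∧ (∀ t ∈ Icc (0:ℝ) 1, 0 ≤ v t) ∧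
  S.ctilde 0 * supN u ≤ minOnIcc u (S.a 0) (S.b 0) ∧
  S.ctilde 1 * supN v ≤ minOnIcc v (S.a 1) (S.b 1)

/-- `𝒦_{ij}(s) = ∫₀¹ kᵢ(t,s) dB_{ij}(t)`. -/
def KK (i j : Fin 2) (s : ℝ) : ℝ := ∫ t, S.k i t s ∂(S.B i j)

/-- `Qᵢ = Σ_l β_{i1}[γ_{il}] l_{il2} δ_{il}[1]`. -/
def Q (i : Fin 2) : ℝ := ∑ l, S.β i 0 (S.γ i l) * S.l2 i l * S.δ i l (fun _ => 1)

/-- `Sᵢ = Σ_l β_{i2}[γ_{il}] l_{il2} δ_{il}[1]`. -/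
def Sq (i : Fin 2) : ℝ := ∑ l, S.β i 1 (S.γ i l) * S.l2 i l * S.δ i l (fun _ => 1)

/-- The determinant `Dᵢ`. -/
def D (i : Fin 2) : ℝ :=
  (1 - S.h2 i 0 * S.β i 0 (S.γ i 0)) * (1 - S.h2 i 1 * S.β i 1 (S.γ i 1))
    - S.h2 i 0 * S.h2 i 1 * S.β i 0 (S.γ i 1) * S.β i 1 (S.γ i 0)

/-- The determinant `𝐷̲ᵢ` (with the lower constants `h_{ij1}`). -/
def Dl (i : Fin 2) : ℝ :=
  (1 - S.h1 i 0 * S.β i 0 (S.γ i 0)) * (1 - S.h1 i 1 * S.β i 1 (S.γ i 1))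
    - S.h1 i 0 * S.h1 i 1 * S.β i 0 (S.γ i 1) * S.β i 1 (S.γ i 0)

def θ1 (i : Fin 2) : ℝ := (1 - S.h2 i 1 * S.β i 1 (S.γ i 1)) / S.D i
def θ2 (i : Fin 2) : ℝ := S.h2 i 1 * S.β i 0 (S.γ i 1) / S.D i
def θ3 (i : Fin 2) : ℝ := S.h2 i 0 * S.β i 1 (S.γ i 0) / S.D i
def θ4 (i : Fin 2) : ℝ := (1 - S.h2 i 0 * S.β i 0 (S.γ i 0)) / S.D i

/-- `1/mᵢ = sup_{t ∈ [0,1]} ∫₀¹ kᵢ(t,s)gᵢ(s) ds`. -/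
def mInv (i : Fin 2) : ℝ :=
  sSup ((fun t => ∫ s in Icc (0:ℝ) 1, S.k i t s * S.g i s) '' Icc (0:ℝ) 1)

/-- `1/Mᵢ = inf_{t ∈ [aᵢ,bᵢ]} ∫_{aᵢ}^{bᵢ} kᵢ(t,s)gᵢ(s) ds`. -/
def MInv (i : Fin 2) : ℝ :=
  sInf ((fun t => ∫ s in Icc (S.a i) (S.b i), S.k i t s * S.g i s) '' Icc (S.a i) (S.b i))

/-- `fᵢ^{0,ρ} = sup{fᵢ(t,u,v)/ρ : t ∈ [0,1], u,v ∈ [0,ρ]}`. -/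
def fSup (i : Fin 2) (ρ : ℝ) : ℝ :=
  sSup {x | ∃ t ∈ Icc (0:ℝ) 1, ∃ u ∈ Icc (0:ℝ) ρ, ∃ v ∈ Icc (0:ℝ) ρ, x = S.f i t u v / ρ}

/-- `f_{1,(ρ,ρ/c)}`. -/
def fInf1 (ρ : ℝ) : ℝ :=
  sInf {x | ∃ t ∈ Icc (S.a 0) (S.b 0), ∃ u ∈ Icc ρ (ρ / S.cc), ∃ v ∈ Icc (0:ℝ) (ρ / S.cc),
    x = S.f 0 t u v / ρ}

/-- `f_{2,(ρ,ρ/c)}`. -/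
def fInf2 (ρ : ℝ) : ℝ :=
  sInf {x | ∃ t ∈ Icc (S.a 1) (S.b 1), ∃ u ∈ Icc (0:ℝ) (ρ / S.cc), ∃ v ∈ Icc ρ (ρ / S.cc),
    x = S.f 1 t u v / ρ}

def fInf (i : Fin 2) (ρ : ℝ) : ℝ := if i = 0 then S.fInf1 ρ else S.fInf2 ρ

/-- `f*_{i,(0,ρ/c)}`. -/
def fInfStar (i : Fin 2) (ρ : ℝ) : ℝ :=
  sInf {x | ∃ t ∈ Icc (S.a i) (S.b i), ∃ u ∈ Icc (0:ℝ) (ρ / S.cc),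
    ∃ v ∈ Icc (0:ℝ) (ρ / S.cc), x = S.f i t u v / ρ}

/-- Condition `(I¹_ρ)`. -/
def CondI1 (ρ : ℝ) : Prop := ∀ i : Fin 2,
  S.fSup i ρ *
      ((supN (S.γ i 0) * S.h2 i 0 * S.θ1 i + supN (S.γ i 1) * S.h2 i 1 * S.θ3 i)
          * (∫ s in Icc (0:ℝ) 1, S.KK i 0 s * S.g i s)
        + (supN (S.γ i 0) * S.h2 i 0 * S.θ2 i + supN (S.γ i 1) * S.h2 i 1 * S.θ4 i)
          * (∫ s in Icc (0:ℝ) 1, S.KK i 1 s * S.g i s)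
        + S.mInv i)
    + supN (S.γ i 0) * S.h2 i 0 * (S.θ1 i * S.Q i + S.θ2 i * S.Sq i)
    + supN (S.γ i 1) * S.h2 i 1 * (S.θ3 i * S.Q i + S.θ4 i * S.Sq i)
    + (∑ j, supN (S.γ i j) * S.l2 i j * S.δ i j fun _ => 1) < 1

/-- The bracket appearing in conditions `(I⁰_ρ)` and `(I⁰_ρ)*`. -/
def Ψ (i : Fin 2) : ℝ :=
  (S.cγ i 0 * supN (S.γ i 0) * S.h1 i 0 / S.Dl i * (1 - S.h1 i 1 * S.β i 1 (S.γ i 1))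
      + S.cγ i 1 * supN (S.γ i 1) * S.h1 i 1 / S.Dl i * (S.h1 i 0 * S.β i 1 (S.γ i 0)))
    * (∫ s in Icc (S.a i) (S.b i), S.KK i 0 s * S.g i s)
  + (S.cγ i 0 * supN (S.γ i 0) * S.h1 i 0 / S.Dl i * (S.h1 i 1 * S.β i 0 (S.γ i 1))
      + S.cγ i 1 * supN (S.γ i 1) * S.h1 i 1 / S.Dl i * (1 - S.h1 i 0 * S.β i 0 (S.γ i 0)))
    * (∫ s in Icc (S.a i) (S.b i), S.KK i 1 s * S.g i s)
  + S.MInv i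

/-- Condition `(I⁰_ρ)`. -/
def CondI0 (ρ : ℝ) : Prop := ∀ i : Fin 2, 1 < S.fInf i ρ * S.Ψ i

/-- Condition `(I⁰_ρ)*`. -/
def CondI0Star (ρ : ℝ) : Prop := ∃ i : Fin 2, 1 < S.fInfStar i ρ * S.Ψ i

/-- `(u,v)` is a fixed point of `T` (as functions on `[0,1]`). -/
def IsFixedPt (u v : ℝ → ℝ) : Prop :=
  ∀ t ∈ Icc (0:ℝ) 1, S.T1 u v t = u t ∧ S.T2 u v t = v t

/-- `(u,v)` is a positive solution: a fixed point of `T` in `K` with `‖(u,v)‖ > 0`. -/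
def PosSol (u v : ℝ → ℝ) : Prop :=
  S.inK u v ∧ S.IsFixedPt u v ∧ 0 < max (supN u) (supN v)

/-- Two pairs are distinct as elements of `C[0,1] × C[0,1]`. -/
def Distinct (u₁ v₁ u₂ v₂ : ℝ → ℝ) : Prop :=
  ∃ t ∈ Icc (0:ℝ) 1, u₁ t ≠ u₂ t ∨ v₁ t ≠ v₂ t

end Setup

namespace TCompactAux

open MeasureTheory Set Filter

noncomputable def clip (t : ℝ) : ℝ := min 1 (max 0 t)

lemma clip_mem (t : ℝ) : clip t ∈ Icc (0:ℝ) 1 :=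
  ⟨le_min zero_le_one (le_max_left 0 t), min_le_left _ _⟩

lemma clip_eq {t : ℝ} (ht : t ∈ Icc (0:ℝ) 1) : clip t = t := by
  simp only [clip, max_eq_right ht.1, min_eq_right ht.2]

lemma continuous_clip : Continuous clip :=
  continuous_const.min (continuous_const.max continuous_id)

lemma continuous_ext {w : ℝ → ℝ} (hw : ContinuousOn w (Icc (0:ℝ) 1)) :
    Continuous (w ∘ clip) :=
  hw.comp_continuous continuous_clip clip_mem

lemma supN_bddAbove {w : ℝ → ℝ} (hw : ContinuousOn w (Icc (0:ℝ) 1)) :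
    BddAbove ((fun t => |w t|) '' Icc (0:ℝ) 1) :=
  (isCompact_Icc.image_of_continuousOn hw.abs).bddAbove

lemma abs_le_supN {w : ℝ → ℝ} (hw : ContinuousOn w (Icc (0:ℝ) 1)) {t : ℝ}
    (ht : t ∈ Icc (0:ℝ) 1) : |w t| ≤ supN w :=
  le_csSup (supN_bddAbove hw) ⟨t, ht, rfl⟩

lemma supN_nonneg (w : ℝ → ℝ) : 0 ≤ supN w :=
  Real.sSup_nonneg (by rintro x ⟨t, _, rfl⟩; exact abs_nonneg _)

lemma supN_le {w : ℝ → ℝ} {C : ℝ} (hC : 0 ≤ C) (h : ∀ t ∈ Icc (0:ℝ) 1, |w t| ≤ C) :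
    supN w ≤ C :=
  Real.sSup_le (by rintro x ⟨t, ht, rfl⟩; exact h t ht) hC

lemma meas_comp_countable {g : ℝ → ℝ} (hg : Measurable g) (hc : (Set.range g).Countable)
    (F : ℝ → ℝ → ℝ) (hF : ∀ c, Measurable fun t => F t c) :
    Measurable fun t => F t (g t) := by
  intro s hs
  have heq : (fun t => F t (g t)) ⁻¹' s
      = ⋃ c ∈ Set.range g, (g ⁻¹' {c}) ∩ ((fun t => F t c) ⁻¹' s) := by
    ext t
    simp only [mem_preimage, mem_iUnion, mem_inter_iff, mem_singleton_iff, exists_prop]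
    constructor
    · intro h; exact ⟨g t, ⟨t, rfl⟩, rfl, h⟩
    · rintro ⟨c, _, hct, h⟩; rw [← hct] at h; exact h
  rw [heq]
  exact MeasurableSet.biUnion hc fun c _ => (hg (measurableSet_singleton c)).inter (hF c hs)

noncomputable def stepApprox (n : ℕ) (t : ℝ) : ℝ :=
  clip (((⌊((n:ℝ)+1) * t⌋ : ℤ) : ℝ) / ((n:ℝ)+1))

lemma stepApprox_measurable (n : ℕ) : Measurable (stepApprox n) := by
  apply continuous_clip.measurable.comp
  have m1 : Measurable fun t : ℝ => (⌊((n:ℝ)+1) * t⌋ : ℤ) :=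
    Int.measurable_floor.comp (measurable_id.const_mul _)
  have m2 : Measurable fun t : ℝ => ((⌊((n:ℝ)+1) * t⌋ : ℤ) : ℝ) :=
    Measurable.comp measurable_from_top m1
  exact m2.div_const _

lemma stepApprox_countable (n : ℕ) : (Set.range (stepApprox n)).Countable := by
  have : Set.range (stepApprox n) ⊆
      Set.range (fun k : ℤ => clip ((k : ℝ) / ((n:ℝ)+1))) := by
    rintro x ⟨t, rfl⟩; exact ⟨⌊((n:ℝ)+1) * t⌋, rfl⟩
  exact (Set.countable_range _).mono this

lemma stepApprox_mem (n : ℕ) (t : ℝ) : stepApprox n t ∈ Icc (0:ℝ) 1 := clip_mem _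

lemma stepApprox_close (n : ℕ) {t : ℝ} (ht : t ∈ Icc (0:ℝ) 1) :
    |stepApprox n t - t| ≤ 1 / ((n:ℝ)+1) := by
  set m : ℝ := (n:ℝ)+1 with hm
  have hn : (0:ℝ) < m := by positivity
  set v : ℝ := ((⌊m * t⌋ : ℤ) : ℝ) / m with hv
  have k1 : m * v = ((⌊m * t⌋ : ℤ) : ℝ) := by rw [hv]; field_simp
  have k2 : m * v ≤ m * t := by rw [k1]; exact Int.floor_le _
  have k3 : m * t < m * v + 1 := by rw [k1]; exact Int.lt_floor_add_one _
  have h1 : v ≤ t := le_of_mul_le_mul_left k2 hn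
  have h0 : 0 ≤ v := by
    rw [hv]
    apply div_nonneg _ (le_of_lt hn)
    have : (0:ℤ) ≤ ⌊m * t⌋ := Int.floor_nonneg.2 (by nlinarith [ht.1])
    exact_mod_cast this
  have tv : t - v ≤ 1/m := by
    rw [le_div_iff₀ hn]; nlinarith
  have h1m : (0:ℝ) ≤ 1/m := by positivity
  have hcl : stepApprox n t = v := clip_eq ⟨h0, le_trans h1 ht.2⟩
  rw [hcl, abs_le]
  constructor <;> linarith

lemma stepApprox_tendsto {t : ℝ} (ht : t ∈ Icc (0:ℝ) 1) :
    Tendsto (fun n => stepApprox n t) atTop (nhds t) := by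
  rw [tendsto_iff_dist_tendsto_zero]
  apply squeeze_zero (fun n => dist_nonneg) (fun n => ?_)
    tendsto_one_div_add_atTop_nhds_zero_nat
  rw [Real.dist_eq]
  exact stepApprox_close n ht

end TCompactAux
namespace TCompactAux

open MeasureTheory Set Filter

local notation "μ0" => MeasureTheory.volume.restrict (Icc (0:ℝ) 1)

variable (S : Setup)

lemma ae_mem_II : ∀ᵐ t ∂μ0, t ∈ Icc (0:ℝ) 1 := ae_restrict_mem measurableSet_Icc

lemma f_comp_aemeas (i : Fin 2) {u v : ℝ → ℝ}
    (hu : ContinuousOn u (Icc (0:ℝ) 1)) (hv : ContinuousOn v (Icc (0:ℝ) 1))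
    (hu0 : ∀ t ∈ Icc (0:ℝ) 1, 0 ≤ u t) (hv0 : ∀ t ∈ Icc (0:ℝ) 1, 0 ≤ v t) :
    AEMeasurable (fun t => S.f i t (u t) (v t)) μ0 := by
  apply aemeasurable_of_tendsto_metrizable_ae atTop
    (f := fun n t => S.f i t (u (stepApprox n t)) (v (stepApprox n t)))
  · intro n
    exact (meas_comp_countable (stepApprox_measurable n) (stepApprox_countable n)
      (fun t c => S.f i t (u c) (v c)) (fun c => S.f_meas i (u c) (v c))).aemeasurable
  · filter_upwards [S.f_cont i, ae_mem_II] with t hcont ht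
    have h1 : Tendsto (fun n => stepApprox n t) atTop (nhdsWithin t (Icc (0:ℝ) 1)) :=
      tendsto_nhdsWithin_of_tendsto_nhds_of_eventually_within _ (stepApprox_tendsto ht)
        (Eventually.of_forall fun n => stepApprox_mem n t)
    have h2 : Tendsto (fun n => u (stepApprox n t)) atTop (nhds (u t)) :=
      (hu t ht).tendsto.comp h1
    have h3 : Tendsto (fun n => v (stepApprox n t)) atTop (nhds (v t)) :=
      (hv t ht).tendsto.comp h1
    have hpair : Tendsto (fun n => (u (stepApprox n t), v (stepApprox n t))) atTop
        (nhdsWithin (u t, v t) (Ici 0 ×ˢ Ici 0)) :=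
      tendsto_nhdsWithin_of_tendsto_nhds_of_eventually_within _ (h2.prodMk_nhds h3)
        (Eventually.of_forall fun n => ⟨hu0 _ (stepApprox_mem n t), hv0 _ (stepApprox_mem n t)⟩)
    exact ((hcont (u t, v t) ⟨hu0 t ht, hv0 t ht⟩).tendsto).comp hpair

lemma exists_bound (i : Fin 2) {r : ℝ} (hr : 0 < r) :
    ∃ C : ℝ, 0 ≤ C ∧ ∀ᵐ t ∂μ0, ∀ x ∈ Icc (0:ℝ) r, ∀ y ∈ Icc (0:ℝ) r, S.f i t x y ≤ C := by
  obtain ⟨φ, hφ, hb⟩ := S.f_bdd i r hr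
  refine ⟨(eLpNormEssSup φ μ0).toReal, ENNReal.toReal_nonneg, ?_⟩
  have hlt : eLpNormEssSup φ μ0 ≠ ⊤ := by
    have h2 := hφ.2
    rw [eLpNorm_exponent_top] at h2
    exact h2.ne
  filter_upwards [hb, ae_le_eLpNormEssSup (f := φ) (μ := μ0)] with t h1 h2 x hx y hy
  calc S.f i t x y ≤ φ t := h1 x hx y hy
    _ ≤ ‖φ t‖ := le_abs_self _
    _ ≤ (eLpNormEssSup φ μ0).toReal := by
        have h3 : ((‖φ t‖₊ : ENNReal)).toReal ≤ (eLpNormEssSup φ μ0).toReal :=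
          ENNReal.toReal_mono hlt h2
        simpa using h3

lemma Φ_nonneg_ae (i : Fin 2) : ∀ᵐ s ∂μ0, 0 ≤ S.Φ i s := by
  filter_upwards [S.k_le i 0 ⟨le_refl 0, zero_le_one⟩, ae_mem_II] with s h1 h2
  exact le_trans (S.k_nonneg i 0 ⟨le_refl 0, zero_le_one⟩ s h2) h1

variable {u v u' v' : ℝ → ℝ} {r C : ℝ}

lemma f_comp_nonneg (i : Fin 2)
    (hu0 : ∀ t ∈ Icc (0:ℝ) 1, 0 ≤ u t) (hv0 : ∀ t ∈ Icc (0:ℝ) 1, 0 ≤ v t) :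
    ∀ᵐ s ∂μ0, 0 ≤ S.f i s (u s) (v s) := by
  filter_upwards [ae_mem_II] with s hs
  exact S.f_nonneg i s hs _ (hu0 s hs) _ (hv0 s hs)

lemma f_comp_le (i : Fin 2)
    (hC : ∀ᵐ t ∂μ0, ∀ x ∈ Icc (0:ℝ) r, ∀ y ∈ Icc (0:ℝ) r, S.f i t x y ≤ C)
    (hu0 : ∀ t ∈ Icc (0:ℝ) 1, 0 ≤ u t) (hv0 : ∀ t ∈ Icc (0:ℝ) 1, 0 ≤ v t)
    (hur : ∀ s ∈ Icc (0:ℝ) 1, u s ≤ r) (hvr : ∀ s ∈ Icc (0:ℝ) 1, v s ≤ r) :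
    ∀ᵐ s ∂μ0, S.f i s (u s) (v s) ≤ C := by
  filter_upwards [hC, ae_mem_II] with s h hs
  exact h _ ⟨hu0 s hs, hur s hs⟩ _ ⟨hv0 s hs, hvr s hs⟩

lemma kgf_aesm (i : Fin 2) (t : ℝ)
    (hu : ContinuousOn u (Icc (0:ℝ) 1)) (hv : ContinuousOn v (Icc (0:ℝ) 1))
    (hu0 : ∀ t ∈ Icc (0:ℝ) 1, 0 ≤ u t) (hv0 : ∀ t ∈ Icc (0:ℝ) 1, 0 ≤ v t) :
    AEStronglyMeasurable (fun s => S.k i t s * S.g i s * S.f i s (u s) (v s)) μ0 :=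
  ((((S.k_meas i).of_uncurry_left.mul (S.g_meas i)).aemeasurable).mul
    (f_comp_aemeas S i hu hv hu0 hv0)).aestronglyMeasurable

lemma kgf_integrable (i : Fin 2) {t : ℝ} (htI : t ∈ Icc (0:ℝ) 1)
    (hu : ContinuousOn u (Icc (0:ℝ) 1)) (hv : ContinuousOn v (Icc (0:ℝ) 1))
    (hu0 : ∀ t ∈ Icc (0:ℝ) 1, 0 ≤ u t) (hv0 : ∀ t ∈ Icc (0:ℝ) 1, 0 ≤ v t)
    (hur : ∀ s ∈ Icc (0:ℝ) 1, u s ≤ r) (hvr : ∀ s ∈ Icc (0:ℝ) 1, v s ≤ r)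
    (hC : ∀ᵐ t ∂μ0, ∀ x ∈ Icc (0:ℝ) r, ∀ y ∈ Icc (0:ℝ) r, S.f i t x y ≤ C) :
    Integrable (fun s => S.k i t s * S.g i s * S.f i s (u s) (v s)) μ0 := by
  apply Integrable.mono' ((S.gΦ_int i).const_mul C) (kgf_aesm S i t hu hv hu0 hv0)
  filter_upwards [S.k_le i t htI, S.g_nonneg i, hC, ae_mem_II, Φ_nonneg_ae S i]
    with s hkΦ hg hfC hs hΦ
  have hk0 : 0 ≤ S.k i t s := S.k_nonneg i t htI s hs
  have hf0 : 0 ≤ S.f i s (u s) (v s) := S.f_nonneg i s hs _ (hu0 s hs) _ (hv0 s hs)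
  have hfC' : S.f i s (u s) (v s) ≤ C := hfC _ ⟨hu0 s hs, hur s hs⟩ _ ⟨hv0 s hs, hvr s hs⟩
  rw [Real.norm_eq_abs, abs_of_nonneg (mul_nonneg (mul_nonneg hk0 hg) hf0)]
  calc S.k i t s * S.g i s * S.f i s (u s) (v s)
      ≤ S.Φ i s * S.g i s * S.f i s (u s) (v s) :=
        mul_le_mul_of_nonneg_right (mul_le_mul_of_nonneg_right hkΦ hg) hf0
    _ ≤ S.Φ i s * S.g i s * C := mul_le_mul_of_nonneg_left hfC' (mul_nonneg hΦ hg)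
    _ = C * (S.g i s * S.Φ i s) := by ring

lemma Phig_absdiff_integrable (i : Fin 2) (hC0 : 0 ≤ C)
    (hu : ContinuousOn u (Icc (0:ℝ) 1)) (hv : ContinuousOn v (Icc (0:ℝ) 1))
    (hu' : ContinuousOn u' (Icc (0:ℝ) 1)) (hv' : ContinuousOn v' (Icc (0:ℝ) 1))
    (hu0 : ∀ t ∈ Icc (0:ℝ) 1, 0 ≤ u t) (hv0 : ∀ t ∈ Icc (0:ℝ) 1, 0 ≤ v t)
    (hu0' : ∀ t ∈ Icc (0:ℝ) 1, 0 ≤ u' t) (hv0' : ∀ t ∈ Icc (0:ℝ) 1, 0 ≤ v' t)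
    (hur : ∀ s ∈ Icc (0:ℝ) 1, u s ≤ r) (hvr : ∀ s ∈ Icc (0:ℝ) 1, v s ≤ r)
    (hur' : ∀ s ∈ Icc (0:ℝ) 1, u' s ≤ r) (hvr' : ∀ s ∈ Icc (0:ℝ) 1, v' s ≤ r)
    (hC : ∀ᵐ t ∂μ0, ∀ x ∈ Icc (0:ℝ) r, ∀ y ∈ Icc (0:ℝ) r, S.f i t x y ≤ C) :
    Integrable (fun s => S.Φ i s * S.g i s *
      |S.f i s (u s) (v s) - S.f i s (u' s) (v' s)|) μ0 := by
  apply Integrable.mono' ((S.gΦ_int i).const_mul (C + C))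
  · exact ((((S.Φ_mem i).1.aemeasurable.mul (S.g_meas i).aemeasurable)).mul
      (continuous_abs.measurable.comp_aemeasurable
        ((f_comp_aemeas S i hu hv hu0 hv0).sub
          (f_comp_aemeas S i hu' hv' hu0' hv0')))).aestronglyMeasurable
  · filter_upwards [S.g_nonneg i, ae_mem_II, Φ_nonneg_ae S i,
      f_comp_le S i hC hu0 hv0 hur hvr, f_comp_le S i hC hu0' hv0' hur' hvr']
      with s hg hs hΦ hfC hfC'
    have hf0 : 0 ≤ S.f i s (u s) (v s) := S.f_nonneg i s hs _ (hu0 s hs) _ (hv0 s hs)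
    have hf0' : 0 ≤ S.f i s (u' s) (v' s) := S.f_nonneg i s hs _ (hu0' s hs) _ (hv0' s hs)
    have habs : |S.f i s (u s) (v s) - S.f i s (u' s) (v' s)| ≤ C + C := by
      rw [abs_le]; constructor <;> linarith
    rw [Real.norm_eq_abs,
      abs_of_nonneg (mul_nonneg (mul_nonneg hΦ hg) (abs_nonneg _))]
    calc S.Φ i s * S.g i s * |S.f i s (u s) (v s) - S.f i s (u' s) (v' s)|
        ≤ S.Φ i s * S.g i s * (C + C) :=
          mul_le_mul_of_nonneg_left habs (mul_nonneg hΦ hg)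
      _ = (C + C) * (S.g i s * S.Φ i s) := by ring

lemma Fdiff_le (i : Fin 2) {t : ℝ} (htI : t ∈ Icc (0:ℝ) 1) (hC0 : 0 ≤ C)
    (hu : ContinuousOn u (Icc (0:ℝ) 1)) (hv : ContinuousOn v (Icc (0:ℝ) 1))
    (hu' : ContinuousOn u' (Icc (0:ℝ) 1)) (hv' : ContinuousOn v' (Icc (0:ℝ) 1))
    (hu0 : ∀ t ∈ Icc (0:ℝ) 1, 0 ≤ u t) (hv0 : ∀ t ∈ Icc (0:ℝ) 1, 0 ≤ v t)
    (hu0' : ∀ t ∈ Icc (0:ℝ) 1, 0 ≤ u' t) (hv0' : ∀ t ∈ Icc (0:ℝ) 1, 0 ≤ v' t)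
    (hur : ∀ s ∈ Icc (0:ℝ) 1, u s ≤ r) (hvr : ∀ s ∈ Icc (0:ℝ) 1, v s ≤ r)
    (hur' : ∀ s ∈ Icc (0:ℝ) 1, u' s ≤ r) (hvr' : ∀ s ∈ Icc (0:ℝ) 1, v' s ≤ r)
    (hC : ∀ᵐ t ∂μ0, ∀ x ∈ Icc (0:ℝ) r, ∀ y ∈ Icc (0:ℝ) r, S.f i t x y ≤ C) :
    |S.F i u v t - S.F i u' v' t| ≤
      ∫ s in Icc (0:ℝ) 1, S.Φ i s * S.g i s *
        |S.f i s (u s) (v s) - S.f i s (u' s) (v' s)| := by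
  have hint1 := kgf_integrable S i htI hu hv hu0 hv0 hur hvr hC
  have hint2 := kgf_integrable S i htI hu' hv' hu0' hv0' hur' hvr' hC
  have hsub : S.F i u v t - S.F i u' v' t = ∫ s in Icc (0:ℝ) 1,
      (S.k i t s * S.g i s * S.f i s (u s) (v s)
        - S.k i t s * S.g i s * S.f i s (u' s) (v' s)) := by
    rw [integral_sub hint1 hint2]; rfl
  rw [hsub]
  have h1 : |∫ s in Icc (0:ℝ) 1,
      (S.k i t s * S.g i s * S.f i s (u s) (v s)
        - S.k i t s * S.g i s * S.f i s (u' s) (v' s))| ≤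
      ∫ s in Icc (0:ℝ) 1, |S.k i t s * S.g i s * S.f i s (u s) (v s)
        - S.k i t s * S.g i s * S.f i s (u' s) (v' s)| := by
    simpa [Real.norm_eq_abs] using norm_integral_le_integral_norm
      (μ := μ0) (f := fun s => S.k i t s * S.g i s * S.f i s (u s) (v s)
        - S.k i t s * S.g i s * S.f i s (u' s) (v' s))
  refine h1.trans (integral_mono_ae ((hint1.sub hint2).abs)
    (Phig_absdiff_integrable S i hC0 hu hv hu' hv' hu0 hv0 hu0' hv0' hur hvr hur' hvr' hC) ?_)
  filter_upwards [S.k_le i t htI, S.g_nonneg i, ae_mem_II, Φ_nonneg_ae S i]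
    with s hkΦ hg hs hΦ
  have hk0 : 0 ≤ S.k i t s := S.k_nonneg i t htI s hs
  have heq : S.k i t s * S.g i s * S.f i s (u s) (v s)
      - S.k i t s * S.g i s * S.f i s (u' s) (v' s)
      = (S.k i t s * S.g i s) * (S.f i s (u s) (v s) - S.f i s (u' s) (v' s)) := by ring
  rw [heq, abs_mul, abs_of_nonneg (mul_nonneg hk0 hg)]
  calc S.k i t s * S.g i s * |S.f i s (u s) (v s) - S.f i s (u' s) (v' s)|
      ≤ S.Φ i s * S.g i s * |S.f i s (u s) (v s) - S.f i s (u' s) (v' s)| :=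
        mul_le_mul_of_nonneg_right (mul_le_mul_of_nonneg_right hkΦ hg) (abs_nonneg _)

end TCompactAux
namespace TCompactAux

open MeasureTheory Set Filter

local notation "μ0" => MeasureTheory.volume.restrict (Icc (0:ℝ) 1)

variable (S : Setup)

lemma measure_ae_mem (ν : Measure ℝ) (hν : ν (Icc (0:ℝ) 1)ᶜ = 0) :
    ∀ᵐ s ∂ν, s ∈ Icc (0:ℝ) 1 := by
  rw [MeasureTheory.ae_iff]
  exact hν

lemma integrable_of_contOn (ν : Measure ℝ) [IsFiniteMeasure ν] (hν : ν (Icc (0:ℝ) 1)ᶜ = 0)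
    {w : ℝ → ℝ} (hw : ContinuousOn w (Icc (0:ℝ) 1)) : Integrable w ν := by
  have h1 : Integrable (w ∘ clip) ν := by
    apply Integrable.mono' (integrable_const (supN w)) (continuous_ext hw).aestronglyMeasurable
    refine Eventually.of_forall fun s => ?_
    rw [Real.norm_eq_abs]
    exact abs_le_supN hw (clip_mem s)
  apply h1.congr
  filter_upwards [measure_ae_mem ν hν] with s hs
  simp [Function.comp, clip_eq hs]

lemma integral_measure_nonneg (ν : Measure ℝ) (hν : ν (Icc (0:ℝ) 1)ᶜ = 0)
    {w : ℝ → ℝ} (h0 : ∀ t ∈ Icc (0:ℝ) 1, 0 ≤ w t) : 0 ≤ ∫ s, w s ∂ν :=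
  integral_nonneg_of_ae (by filter_upwards [measure_ae_mem ν hν] with s hs; exact h0 s hs)

lemma beta_abs_le (ν : Measure ℝ) [IsFiniteMeasure ν] (hν : ν (Icc (0:ℝ) 1)ᶜ = 0)
    {w : ℝ → ℝ} (hw : ContinuousOn w (Icc (0:ℝ) 1)) {rr : ℝ} (hr : supN w ≤ rr) :
    |∫ s, w s ∂ν| ≤ rr * (ν univ).toReal := by
  have h := norm_integral_le_of_norm_le_const (μ := ν) (f := w) (C := rr) ?_
  · simpa [Real.norm_eq_abs, Measure.real] using h
  · filter_upwards [measure_ae_mem ν hν] with s hs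
    rw [Real.norm_eq_abs]
    exact le_trans (abs_le_supN hw hs) hr

lemma integral_measure_tendsto (ν : Measure ℝ) [IsFiniteMeasure ν]
    (hν : ν (Icc (0:ℝ) 1)ᶜ = 0)
    {w : ℝ → ℝ} (hw : ContinuousOn w (Icc (0:ℝ) 1)) {ww : ℕ → ℝ → ℝ}
    (hww : ∀ n, ContinuousOn (ww n) (Icc (0:ℝ) 1))
    (hd : ∀ n, supN (fun t => w t - ww n t) ≤ 1/((n:ℝ)+1)) :
    Tendsto (fun n => ∫ s, ww n s ∂ν) atTop (nhds (∫ s, w s ∂ν)) := by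
  rw [tendsto_iff_dist_tendsto_zero]
  refine squeeze_zero (f := fun n => dist (∫ s, ww n s ∂ν) (∫ s, w s ∂ν))
    (g := fun n => (1/((n:ℝ)+1)) * (ν univ).toReal) (fun n => dist_nonneg) ?_ ?_
  · intro n
    rw [Real.dist_eq, abs_sub_comm]
    have heq : ∫ s, w s ∂ν - ∫ s, ww n s ∂ν = ∫ s, (w s - ww n s) ∂ν :=
      (integral_sub (integrable_of_contOn ν hν hw) (integrable_of_contOn ν hν (hww n))).symm
    rw [heq]
    have h := norm_integral_le_of_norm_le_const (μ := ν) (f := fun s => w s - ww n s)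
      (C := 1/((n:ℝ)+1)) ?_
    · simpa [Real.norm_eq_abs, Measure.real] using h
    · filter_upwards [measure_ae_mem ν hν] with s hs
      rw [Real.norm_eq_abs]
      exact le_trans (abs_le_supN (hw.sub (hww n)) hs) (hd n)
  · simpa using (tendsto_one_div_add_atTop_nhds_zero_nat.mul_const ((ν univ).toReal))

lemma comp_integral_tendsto (ν : Measure ℝ) [IsFiniteMeasure ν]
    (hν : ν (Icc (0:ℝ) 1)ᶜ = 0) {G : ℝ → ℝ} (hG : ContinuousOn G (Ici 0))
    {w : ℝ → ℝ} (hw : ContinuousOn w (Icc (0:ℝ) 1)) (h0 : ∀ t ∈ Icc (0:ℝ) 1, 0 ≤ w t)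
    {ww : ℕ → ℝ → ℝ} (hww : ∀ n, ContinuousOn (ww n) (Icc (0:ℝ) 1))
    (h0n : ∀ n, ∀ t ∈ Icc (0:ℝ) 1, 0 ≤ ww n t)
    (hd : ∀ n, supN (fun t => w t - ww n t) ≤ 1/((n:ℝ)+1)) :
    Tendsto (fun n => G (∫ s, ww n s ∂ν)) atTop (nhds (G (∫ s, w s ∂ν))) := by
  have hb := integral_measure_tendsto ν hν hw hww hd
  have hbw : Tendsto (fun n => ∫ s, ww n s ∂ν) atTop
      (nhdsWithin (∫ s, w s ∂ν) (Ici 0)) :=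
    tendsto_nhdsWithin_of_tendsto_nhds_of_eventually_within _ hb
      (Eventually.of_forall fun n => integral_measure_nonneg ν hν (h0n n))
  exact ((hG _ (integral_measure_nonneg ν hν h0)).tendsto).comp hbw

lemma Fdiff_tendsto (i : Fin 2) {u v : ℝ → ℝ} {uu vv : ℕ → ℝ → ℝ} {r C : ℝ} (hC0 : 0 ≤ C)
    (hu : ContinuousOn u (Icc (0:ℝ) 1)) (hv : ContinuousOn v (Icc (0:ℝ) 1))
    (hu0 : ∀ t ∈ Icc (0:ℝ) 1, 0 ≤ u t) (hv0 : ∀ t ∈ Icc (0:ℝ) 1, 0 ≤ v t)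
    (huu : ∀ n, ContinuousOn (uu n) (Icc (0:ℝ) 1))
    (hvv : ∀ n, ContinuousOn (vv n) (Icc (0:ℝ) 1))
    (huu0 : ∀ n, ∀ t ∈ Icc (0:ℝ) 1, 0 ≤ uu n t)
    (hvv0 : ∀ n, ∀ t ∈ Icc (0:ℝ) 1, 0 ≤ vv n t)
    (hur : ∀ s ∈ Icc (0:ℝ) 1, u s ≤ r) (hvr : ∀ s ∈ Icc (0:ℝ) 1, v s ≤ r)
    (huur : ∀ n, ∀ s ∈ Icc (0:ℝ) 1, uu n s ≤ r)
    (hvvr : ∀ n, ∀ s ∈ Icc (0:ℝ) 1, vv n s ≤ r)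
    (hC : ∀ᵐ t ∂μ0, ∀ x ∈ Icc (0:ℝ) r, ∀ y ∈ Icc (0:ℝ) r, S.f i t x y ≤ C)
    (hdu : ∀ n, supN (fun t => u t - uu n t) ≤ 1/((n:ℝ)+1))
    (hdv : ∀ n, supN (fun t => v t - vv n t) ≤ 1/((n:ℝ)+1)) :
    Tendsto (fun n => ∫ s in Icc (0:ℝ) 1, S.Φ i s * S.g i s *
      |S.f i s (u s) (v s) - S.f i s (uu n s) (vv n s)|) atTop (nhds 0) := by
  have key := tendsto_integral_filter_of_dominated_convergence (μ := μ0) (l := atTop)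
    (F := fun n s => S.Φ i s * S.g i s * |S.f i s (u s) (v s) - S.f i s (uu n s) (vv n s)|)
    (f := fun _ => (0:ℝ)) (bound := fun s => (C + C) * (S.g i s * S.Φ i s)) ?_ ?_ ?_ ?_
  · simpa using key
  · refine Eventually.of_forall fun n => ?_
    exact ((((S.Φ_mem i).1.aemeasurable.mul (S.g_meas i).aemeasurable)).mul
      (continuous_abs.measurable.comp_aemeasurable
        ((f_comp_aemeas S i hu hv hu0 hv0).sub
          (f_comp_aemeas S i (huu n) (hvv n) (huu0 n) (hvv0 n))))).aestronglyMeasurable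
  · refine Eventually.of_forall fun n => ?_
    filter_upwards [S.g_nonneg i, ae_mem_II, Φ_nonneg_ae S i,
      f_comp_le S i hC hu0 hv0 hur hvr,
      f_comp_le S i hC (huu0 n) (hvv0 n) (huur n) (hvvr n)] with s hg hs hΦ hfC hfC'
    have hf0 : 0 ≤ S.f i s (u s) (v s) := S.f_nonneg i s hs _ (hu0 s hs) _ (hv0 s hs)
    have hf0' : 0 ≤ S.f i s (uu n s) (vv n s) :=
      S.f_nonneg i s hs _ (huu0 n s hs) _ (hvv0 n s hs)
    have habs : |S.f i s (u s) (v s) - S.f i s (uu n s) (vv n s)| ≤ C + C := by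
      rw [abs_le]; constructor <;> linarith
    rw [Real.norm_eq_abs,
      abs_of_nonneg (mul_nonneg (mul_nonneg hΦ hg) (abs_nonneg _))]
    calc S.Φ i s * S.g i s * |S.f i s (u s) (v s) - S.f i s (uu n s) (vv n s)|
        ≤ S.Φ i s * S.g i s * (C + C) :=
          mul_le_mul_of_nonneg_left habs (mul_nonneg hΦ hg)
      _ = (C + C) * (S.g i s * S.Φ i s) := by ring
  · exact (S.gΦ_int i).const_mul (C + C)
  · filter_upwards [S.f_cont i, ae_mem_II] with s hcont hs
    have h2 : Tendsto (fun n => uu n s) atTop (nhds (u s)) := by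
      rw [tendsto_iff_dist_tendsto_zero]
      refine squeeze_zero (f := fun n => dist (uu n s) (u s)) (g := fun n => 1/((n:ℝ)+1))
        (fun n => dist_nonneg) ?_ tendsto_one_div_add_atTop_nhds_zero_nat
      intro n
      rw [Real.dist_eq, abs_sub_comm]
      exact le_trans (abs_le_supN (hu.sub (huu n)) hs) (hdu n)
    have h3 : Tendsto (fun n => vv n s) atTop (nhds (v s)) := by
      rw [tendsto_iff_dist_tendsto_zero]
      refine squeeze_zero (f := fun n => dist (vv n s) (v s)) (g := fun n => 1/((n:ℝ)+1))
        (fun n => dist_nonneg) ?_ tendsto_one_div_add_atTop_nhds_zero_nat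
      intro n
      rw [Real.dist_eq, abs_sub_comm]
      exact le_trans (abs_le_supN (hv.sub (hvv n)) hs) (hdv n)
    have hpair : Tendsto (fun n => (uu n s, vv n s)) atTop
        (nhdsWithin (u s, v s) (Ici 0 ×ˢ Ici 0)) :=
      tendsto_nhdsWithin_of_tendsto_nhds_of_eventually_within _ (h2.prodMk_nhds h3)
        (Eventually.of_forall fun n => ⟨huu0 n s hs, hvv0 n s hs⟩)
    have h4 : Tendsto (fun n => S.f i s (uu n s) (vv n s)) atTop
        (nhds (S.f i s (u s) (v s))) :=
      ((hcont (u s, v s) ⟨hu0 s hs, hv0 s hs⟩).tendsto).comp hpair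
    have h5 : Tendsto (fun n => |S.f i s (u s) (v s) - S.f i s (uu n s) (vv n s)|)
        atTop (nhds 0) := by
      simpa using ((tendsto_const_nhds (x := S.f i s (u s) (v s))).sub h4).abs
    simpa using h5.const_mul (S.Φ i s * S.g i s)

end TCompactAux
namespace TCompactAux

open MeasureTheory Set Filter

local notation "μ0" => MeasureTheory.volume.restrict (Icc (0:ℝ) 1)

variable (S : Setup) {u v u' v' : ℝ → ℝ} {r C : ℝ}

lemma kdiff_aesm (i : Fin 2) (t τ : ℝ) :
    AEStronglyMeasurable (fun s => |S.k i t s - S.k i τ s| * (S.g i s * C)) μ0 :=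
  ((continuous_abs.measurable.comp_aemeasurable
      (((S.k_meas i).of_uncurry_left.sub (S.k_meas i).of_uncurry_left).aemeasurable)).mul
    ((S.g_meas i).aemeasurable.mul_const C)).aestronglyMeasurable

lemma kdiff_integrable (i : Fin 2) (hC0 : 0 ≤ C) {t τ : ℝ}
    (htI : t ∈ Icc (0:ℝ) 1) (hτ : τ ∈ Icc (0:ℝ) 1) :
    Integrable (fun s => |S.k i t s - S.k i τ s| * (S.g i s * C)) μ0 := by
  apply Integrable.mono' ((S.gΦ_int i).const_mul (C + C)) (kdiff_aesm S i t τ)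
  filter_upwards [S.k_le i t htI, S.k_le i τ hτ, S.g_nonneg i, ae_mem_II, Φ_nonneg_ae S i]
    with s h1 h2 hg hs hΦ
  have hk1 : 0 ≤ S.k i t s := S.k_nonneg i t htI s hs
  have hk2 : 0 ≤ S.k i τ s := S.k_nonneg i τ hτ s hs
  have habs : |S.k i t s - S.k i τ s| ≤ S.Φ i s + S.Φ i s := by
    rw [abs_le]; constructor <;> linarith
  rw [Real.norm_eq_abs, abs_of_nonneg (mul_nonneg (abs_nonneg _) (mul_nonneg hg hC0))]
  calc |S.k i t s - S.k i τ s| * (S.g i s * C)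
      ≤ (S.Φ i s + S.Φ i s) * (S.g i s * C) :=
        mul_le_mul_of_nonneg_right habs (mul_nonneg hg hC0)
    _ = (C + C) * (S.g i s * S.Φ i s) := by ring

lemma kdiff_integral_tendsto (i : Fin 2) (hC0 : 0 ≤ C) {τ : ℝ} (hτ : τ ∈ Icc (0:ℝ) 1) :
    Tendsto (fun t => ∫ s in Icc (0:ℝ) 1, |S.k i t s - S.k i τ s| * (S.g i s * C))
      (nhdsWithin τ (Icc (0:ℝ) 1)) (nhds 0) := by
  have key := tendsto_integral_filter_of_dominated_convergence (μ := μ0)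
    (l := nhdsWithin τ (Icc (0:ℝ) 1))
    (F := fun t s => |S.k i t s - S.k i τ s| * (S.g i s * C)) (f := fun _ => (0:ℝ))
    (bound := fun s => (C + C) * (S.g i s * S.Φ i s)) ?_ ?_ ?_ ?_
  · simpa using key
  · exact Eventually.of_forall fun t => kdiff_aesm S i t τ
  · filter_upwards [eventually_mem_nhdsWithin] with t htI
    filter_upwards [S.k_le i t htI, S.k_le i τ hτ, S.g_nonneg i, ae_mem_II, Φ_nonneg_ae S i]
      with s h1 h2 hg hs hΦ
    have hk1 : 0 ≤ S.k i t s := S.k_nonneg i t htI s hs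
    have hk2 : 0 ≤ S.k i τ s := S.k_nonneg i τ hτ s hs
    have habs : |S.k i t s - S.k i τ s| ≤ S.Φ i s + S.Φ i s := by
      rw [abs_le]; constructor <;> linarith
    rw [Real.norm_eq_abs, abs_of_nonneg (mul_nonneg (abs_nonneg _) (mul_nonneg hg hC0))]
    calc |S.k i t s - S.k i τ s| * (S.g i s * C)
        ≤ (S.Φ i s + S.Φ i s) * (S.g i s * C) :=
          mul_le_mul_of_nonneg_right habs (mul_nonneg hg hC0)
      _ = (C + C) * (S.g i s * S.Φ i s) := by ring
  · exact (S.gΦ_int i).const_mul (C + C)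
  · filter_upwards [S.k_cont i τ hτ] with s hk
    have h1 : Tendsto (fun t => |S.k i t s - S.k i τ s|) (nhdsWithin τ (Icc (0:ℝ) 1))
        (nhds 0) := hk.mono_left nhdsWithin_le_nhds
    simpa using h1.mul_const (S.g i s * C)

lemma F_t_diff_le (i : Fin 2) {t τ : ℝ} (htI : t ∈ Icc (0:ℝ) 1) (hτ : τ ∈ Icc (0:ℝ) 1)
    (hC0 : 0 ≤ C)
    (hu : ContinuousOn u (Icc (0:ℝ) 1)) (hv : ContinuousOn v (Icc (0:ℝ) 1))
    (hu0 : ∀ t ∈ Icc (0:ℝ) 1, 0 ≤ u t) (hv0 : ∀ t ∈ Icc (0:ℝ) 1, 0 ≤ v t)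
    (hur : ∀ s ∈ Icc (0:ℝ) 1, u s ≤ r) (hvr : ∀ s ∈ Icc (0:ℝ) 1, v s ≤ r)
    (hC : ∀ᵐ t ∂μ0, ∀ x ∈ Icc (0:ℝ) r, ∀ y ∈ Icc (0:ℝ) r, S.f i t x y ≤ C) :
    |S.F i u v t - S.F i u v τ| ≤
      ∫ s in Icc (0:ℝ) 1, |S.k i t s - S.k i τ s| * (S.g i s * C) := by
  have hint1 := kgf_integrable S i htI hu hv hu0 hv0 hur hvr hC
  have hint2 := kgf_integrable S i hτ hu hv hu0 hv0 hur hvr hC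
  have hsub : S.F i u v t - S.F i u v τ = ∫ s in Icc (0:ℝ) 1,
      (S.k i t s * S.g i s * S.f i s (u s) (v s)
        - S.k i τ s * S.g i s * S.f i s (u s) (v s)) := by
    rw [integral_sub hint1 hint2]; rfl
  rw [hsub]
  have h1 : |∫ s in Icc (0:ℝ) 1,
      (S.k i t s * S.g i s * S.f i s (u s) (v s)
        - S.k i τ s * S.g i s * S.f i s (u s) (v s))| ≤
      ∫ s in Icc (0:ℝ) 1, |S.k i t s * S.g i s * S.f i s (u s) (v s)
        - S.k i τ s * S.g i s * S.f i s (u s) (v s)| := by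
    simpa [Real.norm_eq_abs] using norm_integral_le_integral_norm
      (μ := μ0) (f := fun s => S.k i t s * S.g i s * S.f i s (u s) (v s)
        - S.k i τ s * S.g i s * S.f i s (u s) (v s))
  refine h1.trans (integral_mono_ae ((hint1.sub hint2).abs)
    (kdiff_integrable S i hC0 htI hτ) ?_)
  filter_upwards [S.g_nonneg i, ae_mem_II, f_comp_le S i hC hu0 hv0 hur hvr]
    with s hg hs hfC
  have hf0 : 0 ≤ S.f i s (u s) (v s) := S.f_nonneg i s hs _ (hu0 s hs) _ (hv0 s hs)
  have heq : S.k i t s * S.g i s * S.f i s (u s) (v s)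
      - S.k i τ s * S.g i s * S.f i s (u s) (v s)
      = (S.k i t s - S.k i τ s) * (S.g i s * S.f i s (u s) (v s)) := by ring
  rw [heq, abs_mul, abs_of_nonneg (mul_nonneg hg hf0)]
  exact mul_le_mul_of_nonneg_left
    (mul_le_mul_of_nonneg_left hfC hg) (abs_nonneg _)

lemma F_abs_le (i : Fin 2) {t : ℝ} (htI : t ∈ Icc (0:ℝ) 1) (hC0 : 0 ≤ C)
    (hu : ContinuousOn u (Icc (0:ℝ) 1)) (hv : ContinuousOn v (Icc (0:ℝ) 1))
    (hu0 : ∀ t ∈ Icc (0:ℝ) 1, 0 ≤ u t) (hv0 : ∀ t ∈ Icc (0:ℝ) 1, 0 ≤ v t)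
    (hur : ∀ s ∈ Icc (0:ℝ) 1, u s ≤ r) (hvr : ∀ s ∈ Icc (0:ℝ) 1, v s ≤ r)
    (hC : ∀ᵐ t ∂μ0, ∀ x ∈ Icc (0:ℝ) r, ∀ y ∈ Icc (0:ℝ) r, S.f i t x y ≤ C) :
    |S.F i u v t| ≤ C * ∫ s in Icc (0:ℝ) 1, S.g i s * S.Φ i s := by
  have hint := kgf_integrable S i htI hu hv hu0 hv0 hur hvr hC
  have h1 : |S.F i u v t| ≤
      ∫ s in Icc (0:ℝ) 1, |S.k i t s * S.g i s * S.f i s (u s) (v s)| := by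
    have h1' := norm_integral_le_integral_norm
      (μ := μ0) (f := fun s => S.k i t s * S.g i s * S.f i s (u s) (v s))
    simp only [Real.norm_eq_abs] at h1'
    exact h1'
  refine h1.trans ?_
  have h2 : ∫ s in Icc (0:ℝ) 1, |S.k i t s * S.g i s * S.f i s (u s) (v s)|
      ≤ ∫ s in Icc (0:ℝ) 1, C * (S.g i s * S.Φ i s) := by
    refine integral_mono_ae hint.abs ((S.gΦ_int i).const_mul C) ?_
    filter_upwards [S.k_le i t htI, S.g_nonneg i, ae_mem_II, Φ_nonneg_ae S i,
      f_comp_le S i hC hu0 hv0 hur hvr] with s hkΦ hg hs hΦ hfC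
    have hk0 : 0 ≤ S.k i t s := S.k_nonneg i t htI s hs
    have hf0 : 0 ≤ S.f i s (u s) (v s) := S.f_nonneg i s hs _ (hu0 s hs) _ (hv0 s hs)
    rw [abs_of_nonneg (mul_nonneg (mul_nonneg hk0 hg) hf0)]
    calc S.k i t s * S.g i s * S.f i s (u s) (v s)
        ≤ S.Φ i s * S.g i s * S.f i s (u s) (v s) :=
          mul_le_mul_of_nonneg_right (mul_le_mul_of_nonneg_right hkΦ hg) hf0
      _ ≤ S.Φ i s * S.g i s * C := mul_le_mul_of_nonneg_left hfC (mul_nonneg hΦ hg)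
      _ = C * (S.g i s * S.Φ i s) := by ring
  rw [integral_const_mul] at h2
  exact h2

lemma gamma_le (i j : Fin 2) {t : ℝ} (ht : t ∈ Icc (0:ℝ) 1) :
    S.γ i j t ≤ supN (S.γ i j) :=
  le_trans (le_abs_self _) (abs_le_supN (S.γ_cont i j) ht)

lemma beta_nonneg (i j : Fin 2) {w : ℝ → ℝ} (hw0 : ∀ t ∈ Icc (0:ℝ) 1, 0 ≤ w t) :
    0 ≤ S.β i j w :=
  integral_measure_nonneg (S.B i j) (S.B_supp i j) hw0

lemma delta_nonneg (i j : Fin 2) {w : ℝ → ℝ} (hw0 : ∀ t ∈ Icc (0:ℝ) 1, 0 ≤ w t) :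
    0 ≤ S.δ i j w :=
  integral_measure_nonneg (S.C i j) (S.C_supp i j) hw0

lemma H_term_nonneg (i j : Fin 2) {w : ℝ → ℝ} (hw0 : ∀ t ∈ Icc (0:ℝ) 1, 0 ≤ w t) :
    0 ≤ S.H i j (S.β i j w) := S.H_nonneg i j _ (beta_nonneg S i j hw0)

lemma L_term_nonneg (i j : Fin 2) {w : ℝ → ℝ} (hw0 : ∀ t ∈ Icc (0:ℝ) 1, 0 ≤ w t) :
    0 ≤ S.L i j (S.δ i j w) := S.L_nonneg i j _ (delta_nonneg S i j hw0)

lemma H_term_le (i j : Fin 2) {w : ℝ → ℝ} (hw : ContinuousOn w (Icc (0:ℝ) 1))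
    (hw0 : ∀ t ∈ Icc (0:ℝ) 1, 0 ≤ w t) {rr : ℝ} (hsw : supN w ≤ rr) :
    S.H i j (S.β i j w) ≤ S.h2 i j * (rr * ((S.B i j) univ).toReal) := by
  haveI := S.B_fin i j
  have h1 : S.β i j w ≤ rr * ((S.B i j) univ).toReal :=
    le_trans (le_abs_self _) (beta_abs_le (S.B i j) (S.B_supp i j) hw hsw)
  exact le_trans (S.H_bound_upper i j _ (beta_nonneg S i j hw0))
    (mul_le_mul_of_nonneg_left h1 (S.h2_nonneg i j))

lemma L_term_le (i j : Fin 2) {w : ℝ → ℝ} (hw : ContinuousOn w (Icc (0:ℝ) 1))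
    (hw0 : ∀ t ∈ Icc (0:ℝ) 1, 0 ≤ w t) {rr : ℝ} (hsw : supN w ≤ rr) :
    S.L i j (S.δ i j w) ≤ S.l2 i j * (rr * ((S.C i j) univ).toReal) := by
  haveI := S.C_fin i j
  have h1 : S.δ i j w ≤ rr * ((S.C i j) univ).toReal :=
    le_trans (le_abs_self _) (beta_abs_le (S.C i j) (S.C_supp i j) hw hsw)
  exact le_trans (S.L_bound i j _ (delta_nonneg S i j hw0))
    (mul_le_mul_of_nonneg_left h1 (S.l2_nonneg i j))

lemma isCompact_closure_C (A : Set C(Icc (0:ℝ) 1, ℝ)) (M : ℝ)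
    (hM : ∀ q ∈ A, ∀ x : Icc (0:ℝ) 1, q x ∈ Icc (-M) M)
    (heq : ∀ x₀ : Icc (0:ℝ) 1, ∀ ε > (0:ℝ),
      ∀ᶠ t in nhdsWithin (x₀ : ℝ) (Icc (0:ℝ) 1),
        ∀ q ∈ A, ∀ ht : t ∈ Icc (0:ℝ) 1, |q ⟨t, ht⟩ - q x₀| < ε) :
    IsCompact (closure A) := by
  set e := ContinuousMap.isometryEquivBoundedOfCompact (Icc (0:ℝ) 1) ℝ with he
  have hcoe : ∀ q : C(Icc (0:ℝ) 1, ℝ), ∀ y, (e q) y = q y := fun q y => rfl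
  have h := BoundedContinuousFunction.arzela_ascoli (α := Icc (0:ℝ) 1)
    (Icc (-M) M) isCompact_Icc (⇑e '' A) ?_ ?_
  · have himg : ⇑e.toHomeomorph '' closure A = closure (⇑e.toHomeomorph '' A) :=
      e.toHomeomorph.image_closure A
    have h2 : IsCompact (⇑e.toHomeomorph '' closure A) := by
      rw [himg]
      exact h
    exact (Homeomorph.isCompact_image (h := e.toHomeomorph)).mp h2
  · rintro f x ⟨q, hq, rfl⟩
    exact hM q hq x
  · intro x₀
    rw [Metric.equicontinuousAt_iff]
    intro ε hε
    have hev := heq x₀ ε hε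
    rw [← map_nhds_subtype_val x₀, eventually_map] at hev
    rw [Metric.eventually_nhds_iff] at hev
    obtain ⟨δ, hδ, hδ2⟩ := hev
    refine ⟨δ, hδ, fun x hx σ => ?_⟩
    obtain ⟨q, hq, hσ⟩ := σ.2
    have h1 := hδ2 hx q hq x.2
    have hc : ∀ y : Icc (0:ℝ) 1, (σ : BoundedContinuousFunction (Icc (0:ℝ) 1) ℝ) y = q y := by
      intro y; rw [← hσ]; exact hcoe q y
    rw [Real.dist_eq, hc x, hc x₀, abs_sub_comm]
    simpa using h1

end TCompactAux
namespace TCompactAux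

open MeasureTheory Set Filter

local notation "μ0" => MeasureTheory.volume.restrict (Icc (0:ℝ) 1)

variable (S : Setup)

lemma compact_aux (i : Fin 2) (TT : (ℝ→ℝ)→(ℝ→ℝ)→ℝ→ℝ)
    (c0 c1 : (ℝ→ℝ)→(ℝ→ℝ)→ℝ) (CH0 CH1 r : ℝ)
    (hTT : ∀ u v t, TT u v t = S.γ i 0 t * c0 u v + S.γ i 1 t * c1 u v + S.F i u v t)
    (hCH0 : 0 ≤ CH0) (hCH1 : 0 ≤ CH1)
    (hc : ∀ u v : ℝ → ℝ, S.inK u v → max (supN u) (supN v) ≤ r →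
      (0 ≤ c0 u v ∧ c0 u v ≤ CH0) ∧ (0 ≤ c1 u v ∧ c1 u v ≤ CH1)) :
    IsCompact (closure {q : C(Icc (0:ℝ) 1, ℝ) | ∃ u v : ℝ → ℝ,
      S.inK u v ∧ max (supN u) (supN v) ≤ r ∧ ∀ x : Icc (0:ℝ) 1, q x = TT u v ↑x}) := by
  set r1 : ℝ := max r 0 + 1 with hr1def
  have hr1pos : (0:ℝ) < r1 := by positivity
  obtain ⟨C, hC0, hC⟩ := exists_bound S i hr1pos
  have hmem : ∀ u v : ℝ → ℝ, S.inK u v → max (supN u) (supN v) ≤ r →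
      (∀ s ∈ Icc (0:ℝ) 1, u s ≤ r1) ∧ (∀ s ∈ Icc (0:ℝ) 1, v s ≤ r1) := by
    intro u v hK hr
    have hru : supN u ≤ max r 0 := le_trans (le_trans (le_max_left _ _) hr) (le_max_left r 0)
    have hrv : supN v ≤ max r 0 := le_trans (le_trans (le_max_right _ _) hr) (le_max_left r 0)
    constructor <;> intro s hs
    · have h1 : |u s| ≤ supN u := abs_le_supN hK.1 hs
      have h2 := le_abs_self (u s)
      rw [hr1def]; linarith
    · have h1 : |v s| ≤ supN v := abs_le_supN hK.2.1 hs
      have h2 := le_abs_self (v s)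
      rw [hr1def]; linarith
  set M : ℝ := supN (S.γ i 0) * CH0 + supN (S.γ i 1) * CH1
      + C * ∫ s in Icc (0:ℝ) 1, S.g i s * S.Φ i s with hMdef
  apply isCompact_closure_C _ M
  · rintro q ⟨u, v, hK, hr, hTq⟩ x
    have hb := hmem u v hK hr
    have hcc := hc u v hK hr
    obtain ⟨hu, hv, hu0, hv0, -, -⟩ := hK
    rw [hTq x]
    have ht : (x:ℝ) ∈ Icc (0:ℝ) 1 := x.2
    have hγ0 : 0 ≤ S.γ i 0 ↑x := S.γ_nonneg i 0 _ ht
    have hγ1 : 0 ≤ S.γ i 1 ↑x := S.γ_nonneg i 1 _ ht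
    have h1 : |S.γ i 0 ↑x * c0 u v| ≤ supN (S.γ i 0) * CH0 := by
      rw [abs_mul, abs_of_nonneg hγ0, abs_of_nonneg hcc.1.1]
      exact mul_le_mul (gamma_le S i 0 ht) hcc.1.2 hcc.1.1 (supN_nonneg _)
    have h2 : |S.γ i 1 ↑x * c1 u v| ≤ supN (S.γ i 1) * CH1 := by
      rw [abs_mul, abs_of_nonneg hγ1, abs_of_nonneg hcc.2.1]
      exact mul_le_mul (gamma_le S i 1 ht) hcc.2.2 hcc.2.1 (supN_nonneg _)
    have h3 : |S.F i u v ↑x| ≤ C * ∫ s in Icc (0:ℝ) 1, S.g i s * S.Φ i s :=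
      F_abs_le S i ht hC0 hu hv hu0 hv0 hb.1 hb.2 hC
    have habs : |TT u v ↑x| ≤ M := by
      rw [hTT, hMdef]
      exact le_trans (abs_add_le _ _)
        (add_le_add (le_trans (abs_add_le _ _) (add_le_add h1 h2)) h3)
    exact abs_le.mp habs
  · intro x₀ ε hε
    have hτ : (x₀ : ℝ) ∈ Icc (0:ℝ) 1 := x₀.2
    have hγt0 : Tendsto (fun t => |S.γ i 0 t - S.γ i 0 ↑x₀| * CH0)
        (nhdsWithin (x₀:ℝ) (Icc (0:ℝ) 1)) (nhds 0) := by
      have h := (((S.γ_cont i 0 (x₀:ℝ) hτ).tendsto.sub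
        (tendsto_const_nhds (x := S.γ i 0 ↑x₀))).abs).mul_const CH0
      simpa using h
    have hγt1 : Tendsto (fun t => |S.γ i 1 t - S.γ i 1 ↑x₀| * CH1)
        (nhdsWithin (x₀:ℝ) (Icc (0:ℝ) 1)) (nhds 0) := by
      have h := (((S.γ_cont i 1 (x₀:ℝ) hτ).tendsto.sub
        (tendsto_const_nhds (x := S.γ i 1 ↑x₀))).abs).mul_const CH1
      simpa using h
    have hkt := kdiff_integral_tendsto S i hC0 hτ
    have hsum : Tendsto (fun t => |S.γ i 0 t - S.γ i 0 ↑x₀| * CH0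
        + |S.γ i 1 t - S.γ i 1 ↑x₀| * CH1
        + ∫ s in Icc (0:ℝ) 1, |S.k i t s - S.k i ↑x₀ s| * (S.g i s * C))
        (nhdsWithin (x₀:ℝ) (Icc (0:ℝ) 1)) (nhds 0) := by
      have h := (hγt0.add hγt1).add hkt
      simpa using h
    filter_upwards [Tendsto.eventually_lt_const hε hsum, eventually_mem_nhdsWithin]
      with t hωt htI q hq ht
    obtain ⟨u, v, hK, hr, hTq⟩ := hq
    have hb := hmem u v hK hr
    have hcc := hc u v hK hr
    obtain ⟨hu, hv, hu0, hv0, -, -⟩ := hK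
    rw [hTq ⟨t, ht⟩, hTq x₀]
    have key : |TT u v t - TT u v ↑x₀| ≤ |S.γ i 0 t - S.γ i 0 ↑x₀| * CH0
        + |S.γ i 1 t - S.γ i 1 ↑x₀| * CH1
        + ∫ s in Icc (0:ℝ) 1, |S.k i t s - S.k i ↑x₀ s| * (S.g i s * C) := by
      rw [hTT, hTT]
      have heq : (S.γ i 0 t * c0 u v + S.γ i 1 t * c1 u v + S.F i u v t)
          - (S.γ i 0 ↑x₀ * c0 u v + S.γ i 1 ↑x₀ * c1 u v + S.F i u v ↑x₀)
          = ((S.γ i 0 t - S.γ i 0 ↑x₀) * c0 u v + (S.γ i 1 t - S.γ i 1 ↑x₀) * c1 u v)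
            + (S.F i u v t - S.F i u v ↑x₀) := by ring
      rw [heq]
      have h1 : |(S.γ i 0 t - S.γ i 0 ↑x₀) * c0 u v| ≤ |S.γ i 0 t - S.γ i 0 ↑x₀| * CH0 := by
        rw [abs_mul, abs_of_nonneg hcc.1.1]
        exact mul_le_mul_of_nonneg_left hcc.1.2 (abs_nonneg _)
      have h2 : |(S.γ i 1 t - S.γ i 1 ↑x₀) * c1 u v| ≤ |S.γ i 1 t - S.γ i 1 ↑x₀| * CH1 := by
        rw [abs_mul, abs_of_nonneg hcc.2.1]
        exact mul_le_mul_of_nonneg_left hcc.2.2 (abs_nonneg _)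
      have h3 : |S.F i u v t - S.F i u v ↑x₀| ≤
          ∫ s in Icc (0:ℝ) 1, |S.k i t s - S.k i ↑x₀ s| * (S.g i s * C) :=
        F_t_diff_le S i htI hτ hC0 hu hv hu0 hv0 hb.1 hb.2 hC
      exact le_trans (abs_add_le _ _)
        (add_le_add (le_trans (abs_add_le _ _) (add_le_add h1 h2)) h3)
    exact lt_of_le_of_lt key hωt

end TCompactAux

open TCompactAux

/-- The operator `T : K → K` is compact: it is continuous on `K` (with respect to the
sup-norm distance) and maps bounded subsets of `K` to relatively compact subsets of
`C([0,1]) × C([0,1])`. -/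
theorem T_is_compact (S : Setup) :
    (∀ u v : ℝ → ℝ, S.inK u v → ∀ ε > (0:ℝ), ∃ δ > (0:ℝ), ∀ u' v' : ℝ → ℝ, S.inK u' v' →
      max (supN fun t => u t - u' t) (supN fun t => v t - v' t) < δ →
      max (supN fun t => S.T1 u v t - S.T1 u' v' t)
          (supN fun t => S.T2 u v t - S.T2 u' v' t) < ε) ∧
    (∀ r : ℝ, IsCompact (closure
      {p : C(Icc (0:ℝ) 1, ℝ) × C(Icc (0:ℝ) 1, ℝ) | ∃ u v : ℝ → ℝ, S.inK u v ∧
        max (supN u) (supN v) ≤ r ∧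
        ∀ t : Icc (0:ℝ) 1, p.1 t = S.T1 u v t ∧ p.2 t = S.T2 u v t})) := by
  constructor
  · -- continuity on K
    intro u v hK ε hε
    by_contra hcon
    push_neg at hcon
    obtain ⟨hu, hv, hu0, hv0, -, -⟩ := hK
    choose uu vv hKn hclose hbad using fun n : ℕ => hcon (1/((n:ℝ)+1)) (by positivity)
    have huu : ∀ n, ContinuousOn (uu n) (Icc (0:ℝ) 1) := fun n => (hKn n).1
    have hvv : ∀ n, ContinuousOn (vv n) (Icc (0:ℝ) 1) := fun n => (hKn n).2.1
    have huu0 : ∀ n, ∀ t ∈ Icc (0:ℝ) 1, 0 ≤ uu n t := fun n => (hKn n).2.2.1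
    have hvv0 : ∀ n, ∀ t ∈ Icc (0:ℝ) 1, 0 ≤ vv n t := fun n => (hKn n).2.2.2.1
    have hdu : ∀ n, supN (fun t => u t - uu n t) ≤ 1/((n:ℝ)+1) :=
      fun n => le_of_lt (lt_of_le_of_lt (le_max_left _ _) (hclose n))
    have hdv : ∀ n, supN (fun t => v t - vv n t) ≤ 1/((n:ℝ)+1) :=
      fun n => le_of_lt (lt_of_le_of_lt (le_max_right _ _) (hclose n))
    set r : ℝ := max (supN u) (supN v) + 1 with hrdef
    have hr0 : 0 ≤ max (supN u) (supN v) := le_trans (supN_nonneg u) (le_max_left _ _)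
    have hrpos : (0:ℝ) < r := by rw [hrdef]; linarith
    obtain ⟨C0, hC00, hC0⟩ := exists_bound S 0 hrpos
    obtain ⟨C1, hC10, hC1⟩ := exists_bound S 1 hrpos
    have hur : ∀ s ∈ Icc (0:ℝ) 1, u s ≤ r := by
      intro s hs
      have h1 := abs_le_supN hu hs
      have h2 := le_abs_self (u s)
      have h3 := le_max_left (supN u) (supN v)
      rw [hrdef]; linarith
    have hvr : ∀ s ∈ Icc (0:ℝ) 1, v s ≤ r := by
      intro s hs
      have h1 := abs_le_supN hv hs
      have h2 := le_abs_self (v s)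
      have h3 := le_max_right (supN u) (supN v)
      rw [hrdef]; linarith
    have hone : ∀ n : ℕ, 1/((n:ℝ)+1) ≤ 1 := by
      intro n
      rw [div_le_one (by positivity)]
      have := Nat.cast_nonneg (α := ℝ) n
      linarith
    have huur : ∀ n, ∀ s ∈ Icc (0:ℝ) 1, uu n s ≤ r := by
      intro n s hs
      have h1 := abs_le_supN hu hs
      have h2 : |u s - uu n s| ≤ 1/((n:ℝ)+1) :=
        le_trans (abs_le_supN (hu.sub (huu n)) hs) (hdu n)
      have h3 := le_max_left (supN u) (supN v)
      have h4 := neg_abs_le (u s - uu n s)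
      have h5 := le_abs_self (u s)
      have h6 := hone n
      rw [hrdef]; linarith
    have hvvr : ∀ n, ∀ s ∈ Icc (0:ℝ) 1, vv n s ≤ r := by
      intro n s hs
      have h1 := abs_le_supN hv hs
      have h2 : |v s - vv n s| ≤ 1/((n:ℝ)+1) :=
        le_trans (abs_le_supN (hv.sub (hvv n)) hs) (hdv n)
      have h3 := le_max_right (supN u) (supN v)
      have h4 := neg_abs_le (v s - vv n s)
      have h5 := le_abs_self (v s)
      have h6 := hone n
      rw [hrdef]; linarith
    -- convergence of the integral terms
    have hI0 := Fdiff_tendsto S 0 hC00 hu hv hu0 hv0 huu hvv huu0 hvv0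
      hur hvr huur hvvr hC0 hdu hdv
    have hI1 := Fdiff_tendsto S 1 hC10 hu hv hu0 hv0 huu hvv huu0 hvv0
      hur hvr huur hvvr hC1 hdu hdv
    -- convergence of the boundary terms
    have habs : ∀ {x : ℝ} {y : ℕ → ℝ}, Tendsto y atTop (nhds x) →
        Tendsto (fun n => |x - y n|) atTop (nhds 0) := by
      intro x y h
      simpa using ((tendsto_const_nhds (x := x)).sub h).abs
    have hB : ∀ i j : Fin 2, Tendsto (fun n => |S.H i j (S.β i j u) -
        S.H i j (S.β i j (uu n))|) atTop (nhds 0) := by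
      intro i j
      haveI := S.B_fin i j
      exact habs (comp_integral_tendsto (S.B i j) (S.B_supp i j) (S.H_cont i j)
        hu hu0 huu huu0 hdu)
    have hBv : ∀ i j : Fin 2, Tendsto (fun n => |S.H i j (S.β i j v) -
        S.H i j (S.β i j (vv n))|) atTop (nhds 0) := by
      intro i j
      haveI := S.B_fin i j
      exact habs (comp_integral_tendsto (S.B i j) (S.B_supp i j) (S.H_cont i j)
        hv hv0 hvv hvv0 hdv)
    have hD : ∀ i j : Fin 2, Tendsto (fun n => |S.L i j (S.δ i j v) -
        S.L i j (S.δ i j (vv n))|) atTop (nhds 0) := by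
      intro i j
      haveI := S.C_fin i j
      exact habs (comp_integral_tendsto (S.C i j) (S.C_supp i j) (S.L_cont i j)
        hv hv0 hvv hvv0 hdv)
    have hDu : ∀ i j : Fin 2, Tendsto (fun n => |S.L i j (S.δ i j u) -
        S.L i j (S.δ i j (uu n))|) atTop (nhds 0) := by
      intro i j
      haveI := S.C_fin i j
      exact habs (comp_integral_tendsto (S.C i j) (S.C_supp i j) (S.L_cont i j)
        hu hu0 huu huu0 hdu)
    set I0 : ℕ → ℝ := fun n => ∫ s in Icc (0:ℝ) 1, S.Φ 0 s * S.g 0 s *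
      |S.f 0 s (u s) (v s) - S.f 0 s (uu n s) (vv n s)| with hI0def
    set I1 : ℕ → ℝ := fun n => ∫ s in Icc (0:ℝ) 1, S.Φ 1 s * S.g 1 s *
      |S.f 1 s (u s) (v s) - S.f 1 s (uu n s) (vv n s)| with hI1def
    set E1 : ℕ → ℝ := fun n =>
      supN (S.γ 0 0) * (|S.H 0 0 (S.β 0 0 u) - S.H 0 0 (S.β 0 0 (uu n))| +
        |S.L 0 0 (S.δ 0 0 v) - S.L 0 0 (S.δ 0 0 (vv n))|) +
      supN (S.γ 0 1) * (|S.H 0 1 (S.β 0 1 u) - S.H 0 1 (S.β 0 1 (uu n))| +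
        |S.L 0 1 (S.δ 0 1 v) - S.L 0 1 (S.δ 0 1 (vv n))|) + I0 n with hE1def
    set E2 : ℕ → ℝ := fun n =>
      supN (S.γ 1 0) * (|S.L 1 0 (S.δ 1 0 u) - S.L 1 0 (S.δ 1 0 (uu n))| +
        |S.H 1 0 (S.β 1 0 v) - S.H 1 0 (S.β 1 0 (vv n))|) +
      supN (S.γ 1 1) * (|S.L 1 1 (S.δ 1 1 u) - S.L 1 1 (S.δ 1 1 (uu n))| +
        |S.H 1 1 (S.β 1 1 v) - S.H 1 1 (S.β 1 1 (vv n))|) + I1 n with hE2def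
    have hE1 : Tendsto E1 atTop (nhds 0) := by
      have h := ((((hB 0 0).add (hD 0 0)).const_mul (supN (S.γ 0 0))).add
        (((hB 0 1).add (hD 0 1)).const_mul (supN (S.γ 0 1)))).add hI0
      simpa using h
    have hE2 : Tendsto E2 atTop (nhds 0) := by
      have h := ((((hDu 1 0).add (hBv 1 0)).const_mul (supN (S.γ 1 0))).add
        (((hDu 1 1).add (hBv 1 1)).const_mul (supN (S.γ 1 1)))).add hI1
      simpa using h
    have hI0nn : ∀ n, 0 ≤ I0 n := by
      intro n
      apply integral_nonneg_of_ae
      filter_upwards [S.g_nonneg 0, Φ_nonneg_ae S 0] with s hg hΦ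
      exact mul_nonneg (mul_nonneg hΦ hg) (abs_nonneg _)
    have hI1nn : ∀ n, 0 ≤ I1 n := by
      intro n
      apply integral_nonneg_of_ae
      filter_upwards [S.g_nonneg 1, Φ_nonneg_ae S 1] with s hg hΦ
      exact mul_nonneg (mul_nonneg hΦ hg) (abs_nonneg _)
    have hbound1 : ∀ n, (supN fun t => S.T1 u v t - S.T1 (uu n) (vv n) t) ≤ E1 n := by
      intro n
      apply supN_le
      · rw [hE1def]
        dsimp only
        exact add_nonneg (add_nonneg
          (mul_nonneg (supN_nonneg _) (add_nonneg (abs_nonneg _) (abs_nonneg _)))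
          (mul_nonneg (supN_nonneg _) (add_nonneg (abs_nonneg _) (abs_nonneg _))))
          (hI0nn n)
      · intro t ht
        have heq : S.T1 u v t - S.T1 (uu n) (vv n) t =
            (S.γ 0 0 t * ((S.H 0 0 (S.β 0 0 u) - S.H 0 0 (S.β 0 0 (uu n))) +
              (S.L 0 0 (S.δ 0 0 v) - S.L 0 0 (S.δ 0 0 (vv n)))) +
            S.γ 0 1 t * ((S.H 0 1 (S.β 0 1 u) - S.H 0 1 (S.β 0 1 (uu n))) +
              (S.L 0 1 (S.δ 0 1 v) - S.L 0 1 (S.δ 0 1 (vv n))))) +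
            (S.F 0 u v t - S.F 0 (uu n) (vv n) t) := by
          simp only [Setup.T1]; ring
        have hγ0 : 0 ≤ S.γ 0 0 t := S.γ_nonneg 0 0 t ht
        have hγ1 : 0 ≤ S.γ 0 1 t := S.γ_nonneg 0 1 t ht
        have h1 : |S.γ 0 0 t * ((S.H 0 0 (S.β 0 0 u) - S.H 0 0 (S.β 0 0 (uu n))) +
              (S.L 0 0 (S.δ 0 0 v) - S.L 0 0 (S.δ 0 0 (vv n))))| ≤
            supN (S.γ 0 0) * (|S.H 0 0 (S.β 0 0 u) - S.H 0 0 (S.β 0 0 (uu n))| +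
              |S.L 0 0 (S.δ 0 0 v) - S.L 0 0 (S.δ 0 0 (vv n))|) := by
          rw [abs_mul, abs_of_nonneg hγ0]
          exact mul_le_mul (gamma_le S 0 0 ht) (abs_add_le _ _) (abs_nonneg _) (supN_nonneg _)
        have h2 : |S.γ 0 1 t * ((S.H 0 1 (S.β 0 1 u) - S.H 0 1 (S.β 0 1 (uu n))) +
              (S.L 0 1 (S.δ 0 1 v) - S.L 0 1 (S.δ 0 1 (vv n))))| ≤
            supN (S.γ 0 1) * (|S.H 0 1 (S.β 0 1 u) - S.H 0 1 (S.β 0 1 (uu n))| +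
              |S.L 0 1 (S.δ 0 1 v) - S.L 0 1 (S.δ 0 1 (vv n))|) := by
          rw [abs_mul, abs_of_nonneg hγ1]
          exact mul_le_mul (gamma_le S 0 1 ht) (abs_add_le _ _) (abs_nonneg _) (supN_nonneg _)
        have h3 : |S.F 0 u v t - S.F 0 (uu n) (vv n) t| ≤ I0 n :=
          Fdiff_le S 0 ht hC00 hu hv (huu n) (hvv n) hu0 hv0 (huu0 n) (hvv0 n)
            hur hvr (huur n) (hvvr n) hC0
        rw [heq, hE1def]
        exact le_trans (abs_add_le _ _)
          (add_le_add (le_trans (abs_add_le _ _) (add_le_add h1 h2)) h3)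
    have hbound2 : ∀ n, (supN fun t => S.T2 u v t - S.T2 (uu n) (vv n) t) ≤ E2 n := by
      intro n
      apply supN_le
      · rw [hE2def]
        dsimp only
        exact add_nonneg (add_nonneg
          (mul_nonneg (supN_nonneg _) (add_nonneg (abs_nonneg _) (abs_nonneg _)))
          (mul_nonneg (supN_nonneg _) (add_nonneg (abs_nonneg _) (abs_nonneg _))))
          (hI1nn n)
      · intro t ht
        have heq : S.T2 u v t - S.T2 (uu n) (vv n) t =
            (S.γ 1 0 t * ((S.L 1 0 (S.δ 1 0 u) - S.L 1 0 (S.δ 1 0 (uu n))) +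
              (S.H 1 0 (S.β 1 0 v) - S.H 1 0 (S.β 1 0 (vv n)))) +
            S.γ 1 1 t * ((S.L 1 1 (S.δ 1 1 u) - S.L 1 1 (S.δ 1 1 (uu n))) +
              (S.H 1 1 (S.β 1 1 v) - S.H 1 1 (S.β 1 1 (vv n))))) +
            (S.F 1 u v t - S.F 1 (uu n) (vv n) t) := by
          simp only [Setup.T2]; ring
        have hγ0 : 0 ≤ S.γ 1 0 t := S.γ_nonneg 1 0 t ht
        have hγ1 : 0 ≤ S.γ 1 1 t := S.γ_nonneg 1 1 t ht
        have h1 : |S.γ 1 0 t * ((S.L 1 0 (S.δ 1 0 u) - S.L 1 0 (S.δ 1 0 (uu n))) +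
              (S.H 1 0 (S.β 1 0 v) - S.H 1 0 (S.β 1 0 (vv n))))| ≤
            supN (S.γ 1 0) * (|S.L 1 0 (S.δ 1 0 u) - S.L 1 0 (S.δ 1 0 (uu n))| +
              |S.H 1 0 (S.β 1 0 v) - S.H 1 0 (S.β 1 0 (vv n))|) := by
          rw [abs_mul, abs_of_nonneg hγ0]
          exact mul_le_mul (gamma_le S 1 0 ht) (abs_add_le _ _) (abs_nonneg _) (supN_nonneg _)
        have h2 : |S.γ 1 1 t * ((S.L 1 1 (S.δ 1 1 u) - S.L 1 1 (S.δ 1 1 (uu n))) +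
              (S.H 1 1 (S.β 1 1 v) - S.H 1 1 (S.β 1 1 (vv n))))| ≤
            supN (S.γ 1 1) * (|S.L 1 1 (S.δ 1 1 u) - S.L 1 1 (S.δ 1 1 (uu n))| +
              |S.H 1 1 (S.β 1 1 v) - S.H 1 1 (S.β 1 1 (vv n))|) := by
          rw [abs_mul, abs_of_nonneg hγ1]
          exact mul_le_mul (gamma_le S 1 1 ht) (abs_add_le _ _) (abs_nonneg _) (supN_nonneg _)
        have h3 : |S.F 1 u v t - S.F 1 (uu n) (vv n) t| ≤ I1 n :=
          Fdiff_le S 1 ht hC10 hu hv (huu n) (hvv n) hu0 hv0 (huu0 n) (hvv0 n)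
            hur hvr (huur n) (hvvr n) hC1
        rw [heq, hE2def]
        exact le_trans (abs_add_le _ _)
          (add_le_add (le_trans (abs_add_le _ _) (add_le_add h1 h2)) h3)
    have hmax : Tendsto (fun n => max (E1 n) (E2 n)) atTop (nhds 0) := by
      simpa using hE1.max hE2
    obtain ⟨n, hn⟩ := (Tendsto.eventually_lt_const hε hmax).exists
    exact absurd (hbad n)
      (not_le.mpr (lt_of_le_of_lt (max_le_max (hbound1 n) (hbound2 n)) hn))
  · -- compactness
    intro r
    have hBc : ∀ i j : Fin 2, (0:ℝ) ≤ max r 0 * ((S.B i j) univ).toReal :=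
      fun i j => mul_nonneg (le_max_right r 0) ENNReal.toReal_nonneg
    have hCc : ∀ i j : Fin 2, (0:ℝ) ≤ max r 0 * ((S.C i j) univ).toReal :=
      fun i j => mul_nonneg (le_max_right r 0) ENNReal.toReal_nonneg
    have hc1 : IsCompact (closure {q : C(Icc (0:ℝ) 1, ℝ) | ∃ u v : ℝ → ℝ,
        S.inK u v ∧ max (supN u) (supN v) ≤ r ∧
        ∀ x : Icc (0:ℝ) 1, q x = S.T1 u v ↑x}) := by
      apply compact_aux S 0 S.T1
        (fun u v => S.H 0 0 (S.β 0 0 u) + S.L 0 0 (S.δ 0 0 v))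
        (fun u v => S.H 0 1 (S.β 0 1 u) + S.L 0 1 (S.δ 0 1 v))
        (S.h2 0 0 * (max r 0 * ((S.B 0 0) univ).toReal)
          + S.l2 0 0 * (max r 0 * ((S.C 0 0) univ).toReal))
        (S.h2 0 1 * (max r 0 * ((S.B 0 1) univ).toReal)
          + S.l2 0 1 * (max r 0 * ((S.C 0 1) univ).toReal)) r
        (fun u v t => rfl)
        (add_nonneg (mul_nonneg (S.h2_nonneg 0 0) (hBc 0 0))
          (mul_nonneg (S.l2_nonneg 0 0) (hCc 0 0)))
        (add_nonneg (mul_nonneg (S.h2_nonneg 0 1) (hBc 0 1))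
          (mul_nonneg (S.l2_nonneg 0 1) (hCc 0 1)))
      intro u v hK hr
      have hsu : supN u ≤ max r 0 := le_trans (le_trans (le_max_left _ _) hr) (le_max_left r 0)
      have hsv : supN v ≤ max r 0 := le_trans (le_trans (le_max_right _ _) hr) (le_max_left r 0)
      obtain ⟨hu, hv, hu0, hv0, -, -⟩ := hK
      exact ⟨⟨add_nonneg (H_term_nonneg S 0 0 hu0) (L_term_nonneg S 0 0 hv0),
        add_le_add (H_term_le S 0 0 hu hu0 hsu) (L_term_le S 0 0 hv hv0 hsv)⟩,
        ⟨add_nonneg (H_term_nonneg S 0 1 hu0) (L_term_nonneg S 0 1 hv0),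
        add_le_add (H_term_le S 0 1 hu hu0 hsu) (L_term_le S 0 1 hv hv0 hsv)⟩⟩
    have hc2 : IsCompact (closure {q : C(Icc (0:ℝ) 1, ℝ) | ∃ u v : ℝ → ℝ,
        S.inK u v ∧ max (supN u) (supN v) ≤ r ∧
        ∀ x : Icc (0:ℝ) 1, q x = S.T2 u v ↑x}) := by
      apply compact_aux S 1 S.T2
        (fun u v => S.L 1 0 (S.δ 1 0 u) + S.H 1 0 (S.β 1 0 v))
        (fun u v => S.L 1 1 (S.δ 1 1 u) + S.H 1 1 (S.β 1 1 v))
        (S.l2 1 0 * (max r 0 * ((S.C 1 0) univ).toReal)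
          + S.h2 1 0 * (max r 0 * ((S.B 1 0) univ).toReal))
        (S.l2 1 1 * (max r 0 * ((S.C 1 1) univ).toReal)
          + S.h2 1 1 * (max r 0 * ((S.B 1 1) univ).toReal)) r
        (fun u v t => rfl)
        (add_nonneg (mul_nonneg (S.l2_nonneg 1 0) (hCc 1 0))
          (mul_nonneg (S.h2_nonneg 1 0) (hBc 1 0)))
        (add_nonneg (mul_nonneg (S.l2_nonneg 1 1) (hCc 1 1))
          (mul_nonneg (S.h2_nonneg 1 1) (hBc 1 1)))
      intro u v hK hr
      have hsu : supN u ≤ max r 0 := le_trans (le_trans (le_max_left _ _) hr) (le_max_left r 0)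
      have hsv : supN v ≤ max r 0 := le_trans (le_trans (le_max_right _ _) hr) (le_max_left r 0)
      obtain ⟨hu, hv, hu0, hv0, -, -⟩ := hK
      exact ⟨⟨add_nonneg (L_term_nonneg S 1 0 hu0) (H_term_nonneg S 1 0 hv0),
        add_le_add (L_term_le S 1 0 hu hu0 hsu) (H_term_le S 1 0 hv hv0 hsv)⟩,
        ⟨add_nonneg (L_term_nonneg S 1 1 hu0) (H_term_nonneg S 1 1 hv0),
        add_le_add (L_term_le S 1 1 hu hu0 hsu) (H_term_le S 1 1 hv hv0 hsv)⟩⟩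
    have hsub : {p : C(Icc (0:ℝ) 1, ℝ) × C(Icc (0:ℝ) 1, ℝ) | ∃ u v : ℝ → ℝ, S.inK u v ∧
        max (supN u) (supN v) ≤ r ∧
        ∀ t : Icc (0:ℝ) 1, p.1 t = S.T1 u v t ∧ p.2 t = S.T2 u v t} ⊆
        {q : C(Icc (0:ℝ) 1, ℝ) | ∃ u v : ℝ → ℝ, S.inK u v ∧ max (supN u) (supN v) ≤ r ∧
          ∀ x : Icc (0:ℝ) 1, q x = S.T1 u v ↑x} ×ˢ
        {q : C(Icc (0:ℝ) 1, ℝ) | ∃ u v : ℝ → ℝ, S.inK u v ∧ max (supN u) (supN v) ≤ r ∧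
          ∀ x : Icc (0:ℝ) 1, q x = S.T2 u v ↑x} := by
      rintro ⟨q1, q2⟩ ⟨u, v, hK, hr, hT⟩
      exact ⟨⟨u, v, hK, hr, fun x => (hT x).1⟩, ⟨u, v, hK, hr, fun x => (hT x).2⟩⟩
    apply IsCompact.of_isClosed_subset (hc1.prod hc2) isClosed_closure
    refine (closure_mono hsub).trans ?_
    rw [closure_prod_eq]
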